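/- Fix 4 < p ≤ 6, let 0 < δ₁ ≤ 1/2 + 3/p and 0 < δ₂ ≤ 1, and let (ξ, ξ+2/p) be an interval at level n with ξ > 0; set m_ξ = ξ + 1/2 − 1/p. Assume τ is a sequence in T(δ₁, δ₂) such that τ_n ≤ ξ, τ_{n+1} = m_ξ + 4/p and τ_{n+2} ≥ ξ + 1 + 2/p. Let γ be the sequence with γ_{n+1} = m_ξ and γ_k = τ_k for all k ≠ n+1. Then E_p(τ) < E_p(γ). -/

import Mathlib

open MeasureTheory Real Set

/-- The kernel `K_p(τ; x)`. -/
noncomputable def Kp (p : ℝ) (τ : ℕ → ℝ) (x : ℝ) : ℝ :=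
  ∑' n : ℕ, (Set.Ioo (τ n) (τ (n + 1))).indicator
    (fun y => Real.sin (p / 2 * π * (y - n)) / (π * y)) x

/-- The quantity `E_p(τ)`. -/
noncomputable def Ep (p : ℝ) (τ : ℕ → ℝ) : ℝ :=
  ∫ x in Set.Ioi (0 : ℝ), (max 0 (Kp p τ x)) ^ 2

/-- The set of sequences `T(δ₁, δ₂)`. -/
def Tset (δ₁ δ₂ : ℝ) : Set (ℕ → ℝ) :=
  {τ | τ 0 = 0 ∧ StrictMono τ ∧ δ₁ ≤ τ 1 ∧ ∀ n, 1 ≤ n → δ₂ ≤ τ (n + 1) - τ n}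

/-- The supremum `ℰ_p(δ₁, δ₂) = sup_{τ ∈ T(δ₁,δ₂)} E_p(τ)`. -/
noncomputable def Esup (p δ₁ δ₂ : ℝ) : ℝ := sSup (Ep p '' Tset δ₁ δ₂)

/-- `(ξ, ξ + 2/p)` is an *interval at level `n`*, i.e. a connected component of
`{x : ℝ | sin ((p/2) π (x - n)) > 0}`. -/
def IntervalAtLevel (p : ℝ) (n : ℕ) (ξ : ℝ) : Prop :=
  ∃ x ∈ {y : ℝ | 0 < Real.sin (p / 2 * π * (y - n))},
    connectedComponentIn {y : ℝ | 0 < Real.sin (p / 2 * π * (y - n))} x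
      = Set.Ioo ξ (ξ + 2 / p)



/-- difference of squares of sines -/
lemma sin_sq_sub_sin_sq (X Y : ℝ) :
    Real.sin X ^ 2 - Real.sin Y ^ 2 = Real.sin (X + Y) * Real.sin (X - Y) := by
  rw [Real.sin_add, Real.sin_sub]
  nlinarith [Real.sin_sq_add_cos_sq X, Real.sin_sq_add_cos_sq Y]

lemma abs_sin_le_self {t : ℝ} (ht : 0 ≤ t) : |Real.sin t| ≤ t := by
  rw [abs_le]
  constructor
  · rcases le_or_gt t π with h | h
    · have := Real.sin_nonneg_of_nonneg_of_le_pi ht h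
      linarith
    · have := Real.neg_one_le_sin t
      have : (1:ℝ) ≤ π := by linarith [Real.pi_gt_three]
      linarith [Real.neg_one_le_sin t]
  · exact Real.sin_le ht

/-- term vanishing for other indices -/
lemma Kp_term_eq_zero {p : ℝ} {σ : ℕ → ℝ} (hσ : Monotone σ) {k j : ℕ} {x : ℝ}
    (hx : x ∈ Set.Ioo (σ k) (σ (k + 1))) (hj : j ≠ k) :
    (Set.Ioo (σ j) (σ (j + 1))).indicator
      (fun y => Real.sin (p / 2 * π * (y - j)) / (π * y)) x = 0 := by
  rw [Set.indicator_of_notMem]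
  intro hxj
  rcases lt_or_gt_of_ne hj with h | h
  · have h2 : σ (j + 1) ≤ σ k := hσ (by omega)
    have := hx.1; have := hxj.2; linarith
  · have h2 : σ (k + 1) ≤ σ j := hσ (by omega)
    have := hx.2; have := hxj.1; linarith

lemma Kp_eval {p : ℝ} {σ : ℕ → ℝ} (hσ : Monotone σ) {k : ℕ} {x : ℝ}
    (hx : x ∈ Set.Ioo (σ k) (σ (k + 1))) :
    Kp p σ x = Real.sin (p / 2 * π * (x - k)) / (π * x) := by
  unfold Kp
  rw [tsum_eq_single k (fun j hj => Kp_term_eq_zero hσ hx hj)]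
  rw [Set.indicator_of_mem hx]

lemma Kp_eval_zero {p : ℝ} {σ : ℕ → ℝ} {x : ℝ}
    (h : ∀ k, x ∉ Set.Ioo (σ k) (σ (k + 1))) : Kp p σ x = 0 := by
  unfold Kp
  convert tsum_zero with j
  exact Set.indicator_of_notMem (h j) _

lemma Kp_summand_summable {p : ℝ} {σ : ℕ → ℝ} (hσ : Monotone σ) (x : ℝ) :
    Summable (fun j => (Set.Ioo (σ j) (σ (j + 1))).indicator
      (fun y => Real.sin (p / 2 * π * (y - j)) / (π * y)) x) := by
  by_cases h : ∃ k, x ∈ Set.Ioo (σ k) (σ (k + 1))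
  · obtain ⟨k, hk⟩ := h
    apply summable_of_ne_finset_zero (s := {k})
    intro j hj
    exact Kp_term_eq_zero hσ hk (by simpa using hj)
  · push_neg at h
    apply summable_of_ne_finset_zero (s := ∅)
    intro j _
    exact Set.indicator_of_notMem (h j) _

lemma Kp_measurable (p : ℝ) (σ : ℕ → ℝ) (hσ : Monotone σ) : Measurable (Kp p σ) := by
  have hterm : ∀ j : ℕ, Measurable (fun x => (Set.Ioo (σ j) (σ (j + 1))).indicator
      (fun y => Real.sin (p / 2 * π * (y - j)) / (π * y)) x) := by
    intro j
    exact Measurable.indicator (by fun_prop) measurableSet_Ioo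
  apply measurable_of_tendsto_metrizable
    (f := fun N x => ∑ j ∈ Finset.range N, (Set.Ioo (σ j) (σ (j + 1))).indicator
      (fun y => Real.sin (p / 2 * π * (y - j)) / (π * y)) x)
  · intro N
    exact Finset.measurable_sum _ (fun j _ => hterm j)
  · rw [tendsto_pi_nhds]
    intro x
    exact ((Kp_summand_summable hσ x).hasSum).tendsto_sum_nat

lemma Kp_bound {p : ℝ} {σ : ℕ → ℝ} (hσ0 : σ 0 = 0) (hσ : Monotone σ)
    (hp : 0 < p) (hσ1 : 0 < σ 1) {x : ℝ} (hx : 0 < x) :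
    |Kp p σ x| ≤ min (max (p / 2) (1 / (π * σ 1))) (1 / (π * x)) := by
  have hπ := Real.pi_pos
  by_cases h : ∃ k, x ∈ Set.Ioo (σ k) (σ (k + 1))
  · obtain ⟨k, hk⟩ := h
    rw [Kp_eval hσ hk]
    have hπx : 0 < π * x := by positivity
    have habs : |Real.sin (p / 2 * π * (x - k)) / (π * x)|
        = |Real.sin (p / 2 * π * (x - k))| / (π * x) := by
      rw [abs_div, abs_of_pos hπx]
    rw [habs, le_min_iff]
    constructor
    · rcases Nat.eq_zero_or_pos k with rfl | hkpos
      · -- x ∈ (0, σ 1), use |sin t| ≤ t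
        have harg : (0:ℝ) ≤ p / 2 * π * (x - (0:ℕ)) := by
          push_cast
          nlinarith
        have := abs_sin_le_self harg
        have hle : |Real.sin (p / 2 * π * (x - (0:ℕ)))| / (π * x) ≤ p / 2 := by
          rw [div_le_iff₀ hπx]
          push_cast at this ⊢
          nlinarith
        exact le_trans hle (le_max_left _ _)
      · -- k ≥ 1, so σ 1 ≤ σ k < x
        have h1 : σ 1 ≤ σ k := hσ hkpos
        have hx1 : σ 1 < x := lt_of_le_of_lt h1 hk.1
        have : |Real.sin (p / 2 * π * (x - k))| / (π * x) ≤ 1 / (π * x) :=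
          (div_le_div_iff_of_pos_right hπx).2 (Real.abs_sin_le_one _)
        refine le_trans this (le_trans ?_ (le_max_right _ _))
        apply one_div_le_one_div_of_le (by positivity)
        nlinarith
    · exact (div_le_div_iff_of_pos_right hπx).2 (Real.abs_sin_le_one _)
  · push_neg at h
    rw [Kp_eval_zero h]
    simp only [abs_zero, le_min_iff]
    constructor
    · exact le_trans (by positivity) (le_max_left _ _)
    · positivity

lemma integrable_dom {M : ℝ} (hM : 0 ≤ M) :
    IntegrableOn (fun x : ℝ => min (M ^ 2) (1 / (π * x) ^ 2)) (Set.Ioi (0 : ℝ)) := by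
  have hπ := Real.pi_pos
  have hmeas : Measurable (fun x : ℝ => min (M ^ 2) (1 / (π * x) ^ 2)) := by fun_prop
  rw [← Set.Ioc_union_Ioi_eq_Ioi (zero_le_one (α := ℝ))]
  apply MeasureTheory.IntegrableOn.union
  · -- bounded by M^2 on Ioc 0 1
    apply MeasureTheory.Integrable.mono' (g := fun _ => M ^ 2)
      (integrable_const _) hmeas.aestronglyMeasurable
    filter_upwards with x
    rw [Real.norm_eq_abs, abs_of_nonneg (le_min (by positivity) (by positivity))]
    exact min_le_left _ _
  · -- on Ioi 1 bounded by π⁻² x⁻²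
    have hint : IntegrableOn (fun x : ℝ => π⁻¹ ^ 2 * x⁻¹ ^ 2) (Set.Ioi (1 : ℝ)) := by
      apply MeasureTheory.Integrable.const_mul
      have := (integrableOn_Ioi_rpow_iff (s := (-2)) (t := (1:ℝ)) one_pos).2 (by norm_num)
      apply this.congr_fun ?_ measurableSet_Ioi
      intro x hx
      have hx0 : (0:ℝ) < x := lt_trans one_pos hx
      show x ^ ((-2):ℝ) = x⁻¹ ^ 2
      rw [show ((-2):ℝ) = ((-2:ℤ):ℝ) by norm_num, Real.rpow_intCast, zpow_neg, inv_pow]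
      norm_cast
    apply MeasureTheory.Integrable.mono' hint hmeas.aestronglyMeasurable
    filter_upwards [MeasureTheory.ae_restrict_mem measurableSet_Ioi] with x hx
    have hx0 : (0:ℝ) < x := lt_trans one_pos hx
    rw [Real.norm_eq_abs, abs_of_nonneg (le_min (by positivity) (by positivity))]
    refine le_trans (min_le_right _ _) (le_of_eq ?_)
    field_simp

lemma integrable_F {p : ℝ} {σ : ℕ → ℝ} (hσ0 : σ 0 = 0) (hσ : Monotone σ)
    (hp : 0 < p) (hσ1 : 0 < σ 1) :
    IntegrableOn (fun x => (max 0 (Kp p σ x)) ^ 2) (Set.Ioi (0 : ℝ)) := by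
  have hπ := Real.pi_pos
  set M := max (p / 2) (1 / (π * σ 1)) with hM
  have hM0 : 0 ≤ M := le_trans (by positivity) (le_max_left _ _)
  apply MeasureTheory.Integrable.mono' (integrable_dom hM0)
  · exact ((measurable_const.max (Kp_measurable p σ hσ)).pow_const 2).aestronglyMeasurable
  · filter_upwards [MeasureTheory.ae_restrict_mem measurableSet_Ioi] with x hx
    have hb := Kp_bound hσ0 hσ hp hσ1 (by exact hx)
    have h1 : |Kp p σ x| ≤ M := le_trans hb (min_le_left _ _)
    have h2 : |Kp p σ x| ≤ 1 / (π * x) := le_trans hb (min_le_right _ _)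
    have habs : (max 0 (Kp p σ x)) ^ 2 ≤ |Kp p σ x| ^ 2 := by
      rcases le_or_gt (Kp p σ x) 0 with h | h
      · rw [max_eq_left h]
        simpa using sq_nonneg |Kp p σ x|
      · rw [max_eq_right (le_of_lt h), sq_abs]
    rw [Real.norm_eq_abs, abs_of_nonneg (sq_nonneg _)]
    apply le_min
    · nlinarith [abs_nonneg (Kp p σ x)]
    · have h10 : (0:ℝ) ≤ 1 / (π * x) := le_trans (abs_nonneg _) h2
      calc (max 0 (Kp p σ x)) ^ 2 ≤ |Kp p σ x| ^ 2 := habs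
        _ ≤ (1 / (π * x)) ^ 2 := by nlinarith [abs_nonneg (Kp p σ x)]
        _ = 1 / (π * x) ^ 2 := by rw [div_pow, one_pow]


lemma sin_nonpos_aux {θ : ℝ} (h1 : -π ≤ θ) (h2 : θ ≤ 0) : Real.sin θ ≤ 0 := by
  have := Real.sin_nonneg_of_nonneg_of_le_pi (by linarith : (0:ℝ) ≤ -θ) (by linarith)
  rw [Real.sin_neg] at this; linarith

section SL
variable {p u : ℝ} (hp4 : 4 < p) (hp6 : p ≤ 6)

lemma sl_pu_le {b : ℝ} (h : u ≤ b / p) (hp0 : 0 < p) : p * u ≤ b := by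
  have h2 : p * (b / p) = b := by field_simp
  nlinarith [mul_le_mul_of_nonneg_left h hp0.le]

lemma sl_pu_ge {b : ℝ} (h : b / p ≤ u) (hp0 : 0 < p) : b ≤ p * u := by
  have h2 : p * (b / p) = b := by field_simp
  nlinarith [mul_le_mul_of_nonneg_left h hp0.le]

include hp4 hp6 in
lemma SL1 (h1 : 1/2 - 1/p ≤ u) (h2 : u ≤ 2/p) :
    (max 0 (Real.sin (p/2*π*u)))^2 ≤ (max 0 (Real.sin (p/2*π*(u - 1))))^2 := by
  have hp0 : (0:ℝ) < p := by linarith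
  have hπ := Real.pi_pos
  have hpu2 : p * u ≤ 2 := sl_pu_le (by linarith) hp0
  have hpu1 : p/2 - 1 ≤ p * u := by
    have key : p * (1/2 - 1/p) = p/2 - 1 := by field_simp
    nlinarith [mul_le_mul_of_nonneg_left h1 hp0.le]
  have s1 : 0 ≤ Real.sin (p/2*π*u) :=
    Real.sin_nonneg_of_nonneg_of_le_pi (by nlinarith) (by nlinarith)
  have s2 : 0 ≤ Real.sin (p/2*π*(u-1)) := by
    rw [← Real.sin_add_two_pi]
    exact Real.sin_nonneg_of_nonneg_of_le_pi (by nlinarith) (by nlinarith)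
  rw [max_eq_right s1, max_eq_right s2]
  have hid := sin_sq_sub_sin_sq (p/2*π*(u-1)) (p/2*π*u)
  have sXY : Real.sin (p/2*π*(u-1) + p/2*π*u) ≤ 0 := by
    have e : p/2*π*(u-1) + p/2*π*u = p/2*π*(2*u-1) := by ring
    rw [e]
    exact sin_nonpos_aux (by nlinarith) (by nlinarith)
  have sXmY : Real.sin (p/2*π*(u-1) - p/2*π*u) ≤ 0 := by
    have e : p/2*π*(u-1) - p/2*π*u = -(p/2*π) := by ring
    rw [e, Real.sin_neg]
    have : 0 ≤ Real.sin (p/2*π) := by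
      rw [← Real.sin_sub_two_pi]
      exact Real.sin_nonneg_of_nonneg_of_le_pi (by nlinarith) (by nlinarith)
    linarith
  nlinarith [hid, sXY, sXmY, mul_nonneg (neg_nonneg.2 sXY) (neg_nonneg.2 sXmY)]

include hp4 hp6 in
lemma SL5 (h1 : 1 ≤ u) (h2 : u ≤ 1/2 - 1/p + 4/p) :
    (max 0 (Real.sin (p/2*π*(u - 1))))^2 ≤ (max 0 (Real.sin (p/2*π*u)))^2 := by
  have hp0 : (0:ℝ) < p := by linarith
  have hπ := Real.pi_pos
  have hpu1 : p ≤ p * u := by nlinarith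
  have hpu2 : p * u ≤ p/2 + 3 := by
    have key : p * (1/2 - 1/p + 4/p) = p/2 + 3 := by field_simp; ring
    nlinarith [mul_le_mul_of_nonneg_left h2 hp0.le]
  have s2 : 0 ≤ Real.sin (p/2*π*(u-1)) :=
    Real.sin_nonneg_of_nonneg_of_le_pi (by nlinarith) (by nlinarith)
  have s1 : 0 ≤ Real.sin (p/2*π*u) := by
    rw [← Real.sin_sub_two_pi]
    exact Real.sin_nonneg_of_nonneg_of_le_pi (by nlinarith) (by nlinarith)
  rw [max_eq_right s1, max_eq_right s2]
  have hid := sin_sq_sub_sin_sq (p/2*π*(u-1)) (p/2*π*u)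
  have sXY : 0 ≤ Real.sin (p/2*π*(u-1) + p/2*π*u) := by
    have e : p/2*π*(u-1) + p/2*π*u = p/2*π*(2*u-1) := by ring
    rw [e, ← Real.sin_sub_two_pi]
    exact Real.sin_nonneg_of_nonneg_of_le_pi (by nlinarith) (by nlinarith)
  have sXmY : Real.sin (p/2*π*(u-1) - p/2*π*u) ≤ 0 := by
    have e : p/2*π*(u-1) - p/2*π*u = -(p/2*π) := by ring
    rw [e, Real.sin_neg]
    have : 0 ≤ Real.sin (p/2*π) := by
      rw [← Real.sin_sub_two_pi]
      exact Real.sin_nonneg_of_nonneg_of_le_pi (by nlinarith) (by nlinarith)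
    linarith
  nlinarith [mul_nonpos_of_nonneg_of_nonpos sXY sXmY]

include hp4 hp6 in
lemma SL2 (h1 : 2/p ≤ u) (h2 : u ≤ 4/p) :
    max 0 (Real.sin (p/2*π*u)) = 0 := by
  have hp0 : (0:ℝ) < p := by linarith
  have hπ := Real.pi_pos
  have hpu1 : 2 ≤ p * u := sl_pu_ge h1 hp0
  have hpu2 : p * u ≤ 4 := sl_pu_le h2 hp0
  apply max_eq_left
  rw [← Real.sin_sub_two_pi]
  exact sin_nonpos_aux (by nlinarith) (by nlinarith)

include hp4 hp6 in
lemma SL4 (h1 : 4/p ≤ u) (h2 : u ≤ 1) :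
    max 0 (Real.sin (p/2*π*(u - 1))) = 0 := by
  have hp0 : (0:ℝ) < p := by linarith
  have hπ := Real.pi_pos
  have hpu1 : 4 ≤ p * u := sl_pu_ge h1 hp0
  have hpu2 : p * u ≤ p := by nlinarith
  exact max_eq_left (sin_nonpos_aux (by nlinarith) (by nlinarith))

include hp4 hp6 in
lemma SL3 (h1 : 2/p < u) (h2 : u < 1 - 2/p) :
    0 < (max 0 (Real.sin (p/2*π*(u - 1))))^2 := by
  have hp0 : (0:ℝ) < p := by linarith
  have hπ := Real.pi_pos
  have hpu1 : 2 < p * u := by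
    have key : p * (2/p) = 2 := by field_simp
    nlinarith [mul_lt_mul_of_pos_left h1 hp0]
  have hpu2 : p * u < p - 2 := by
    have key : p * (1 - 2/p) = p - 2 := by field_simp
    nlinarith [mul_lt_mul_of_pos_left h2 hp0]
  have hpos : 0 < Real.sin (p/2*π*(u - 1)) := by
    rw [← Real.sin_add_two_pi]
    exact Real.sin_pos_of_pos_of_lt_pi (by nlinarith) (by nlinarith)
  have : max 0 (Real.sin (p/2*π*(u - 1))) = Real.sin (p/2*π*(u - 1)) := max_eq_right hpos.le
  rw [this]
  positivity
end SL



noncomputable def Phi (p t : ℝ) : ℝ := (max 0 (Real.sin (p/2*π*t)))^2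

noncomputable def Wf (x : ℝ) : ℝ := 1/(π*x)^2

lemma Phi_continuous (p : ℝ) : Continuous (Phi p) := by
  unfold Phi
  exact (continuous_const.max (Real.continuous_sin.comp (continuous_const.mul continuous_id))).pow 2

lemma Wf_anti {x y : ℝ} (hx : 0 < x) (hxy : x ≤ y) : Wf y ≤ Wf x := by
  unfold Wf
  have hπ := Real.pi_pos
  apply div_le_div_of_nonneg_left (by norm_num) (by positivity)
  nlinarith [mul_nonneg (mul_nonneg (le_of_lt (mul_pos hπ hπ)) (sub_nonneg.2 hxy))
    (by linarith : (0:ℝ) ≤ x + y)]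

lemma Wf_anti_strict {x y : ℝ} (hx : 0 < x) (hxy : x < y) : Wf y < Wf x := by
  unfold Wf
  have hπ := Real.pi_pos
  apply div_lt_div_of_pos_left (by norm_num) (by positivity)
  nlinarith [mul_pos (mul_pos (mul_pos hπ hπ) (sub_pos.2 hxy)) (by linarith : (0:ℝ) < x + y)]

set_option maxHeartbeats 1000000 in
/-- The core strict integral inequality. -/
lemma core (p ξ : ℝ) (hp4 : 4 < p) (hp6 : p ≤ 6) (hξ : 0 < ξ) :
    0 < ∫ x in (ξ + (1/2 - 1/p))..(ξ + (1/2 - 1/p) + 4/p),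
      ((Phi p (x - ξ - 1) - Phi p (x - ξ)) * Wf x) := by
  have hp0 : (0:ℝ) < p := by linarith
  have hπ := Real.pi_pos
  have hr1 : 1/p < 1/4 := one_div_lt_one_div_of_lt (by norm_num) hp4
  have hr2 : 1/6 ≤ 1/p := one_div_le_one_div_of_le hp0 hp6
  have e2p : (2:ℝ)/p = 2*(1/p) := by ring
  have e4p : (4:ℝ)/p = 4*(1/p) := by ring
  set q : ℝ := 1/2 - 1/p with hqdef
  set m : ℝ := ξ + q with hmdef
  have hq0 : 0 < q := by rw [hqdef]; linarith
  have o1 : m ≤ ξ + 2/p := by rw [hmdef, hqdef]; linarith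
  have o2 : ξ + 2/p < ξ + (1 - 2/p) := by linarith
  have o3 : ξ + (1 - 2/p) ≤ ξ + 4/p := by linarith
  have o4 : ξ + 4/p ≤ m + 4/p := by rw [hmdef]; linarith
  have hm0 : 0 < m := by rw [hmdef]; linarith
  set b1 : ℝ := ξ + 2/p with hb1
  set b2 : ℝ := ξ + (1 - 2/p) with hb2
  set b3 : ℝ := ξ + 4/p with hb3
  set W₀ : ℝ := Wf b3 with hW0def
  set f : ℝ → ℝ := fun x => Phi p (x - ξ - 1) - Phi p (x - ξ) with hfdef
  clear_value q m b1 b2 b3 W₀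
  have hΦc := Phi_continuous p
  have hfc : Continuous f := by
    apply Continuous.sub
    · exact hΦc.comp ((continuous_id.sub continuous_const).sub continuous_const)
    · exact hΦc.comp (continuous_id.sub continuous_const)
  have hWon : ContinuousOn Wf {x : ℝ | 0 < x} := by
    unfold Wf
    apply ContinuousOn.div continuousOn_const
    · fun_prop
    · intro x hx
      have : (0:ℝ) < x := hx
      positivity
  have hii : ∀ a b : ℝ, m ≤ a → m ≤ b →
      IntervalIntegrable (fun x => f x * (Wf x - W₀)) volume a b := by
    intro a b ha hb
    apply ContinuousOn.intervalIntegrable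
    apply ContinuousOn.mul (hfc.continuousOn)
    apply ContinuousOn.sub ?_ continuousOn_const
    apply hWon.mono
    intro x hx
    have h1 := Set.mem_uIcc.1 hx
    simp only [Set.mem_setOf_eq]
    rcases h1 with h | h
    · linarith [h.1]
    · linarith [h.1]
  -- Step A : ∫ f = 0
  have hper : Function.Periodic (Phi p) (4/p) := by
    intro t
    unfold Phi
    congr 2
    have : p/2*π*(t + 4/p) = p/2*π*t + 2*π := by field_simp; ring
    rw [this, Real.sin_add_two_pi]
  have hmassA : (∫ x in m..(m + 4/p), Phi p (x - ξ - 1))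
      = ∫ t in (m - (ξ+1))..(m - (ξ+1) + 4/p), Phi p t := by
    have h := intervalIntegral.integral_comp_sub_right (a := m) (b := m + 4/p) (Phi p) (ξ+1)
    have e1 : ∀ x : ℝ, x - ξ - 1 = x - (ξ+1) := fun x => by ring
    have e2 : m + 4/p - (ξ+1) = m - (ξ+1) + 4/p := by ring
    simp only [e1]
    rw [h, e2]
  have hmassB : (∫ x in m..(m + 4/p), Phi p (x - ξ))
      = ∫ t in (m - ξ)..(m - ξ + 4/p), Phi p t := by
    have h := intervalIntegral.integral_comp_sub_right (a := m) (b := m + 4/p) (Phi p) ξ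
    have e2 : m + 4/p - ξ = m - ξ + 4/p := by ring
    rw [h, e2]
  have hmass : (∫ x in m..(m + 4/p), f x) = 0 := by
    have hint1 : IntervalIntegrable (fun x => Phi p (x - ξ - 1)) volume m (m + 4/p) :=
      (hΦc.comp ((continuous_id.sub continuous_const).sub continuous_const)).intervalIntegrable _ _
    have hint2 : IntervalIntegrable (fun x => Phi p (x - ξ)) volume m (m + 4/p) :=
      (hΦc.comp (continuous_id.sub continuous_const)).intervalIntegrable _ _
    simp only [hfdef]
    rw [intervalIntegral.integral_sub hint1 hint2, hmassA, hmassB,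
      hper.intervalIntegral_add_eq (m - (ξ+1)) (m - ξ)]
    ring
  -- Step B : replace W by W - W₀
  have hstep : (∫ x in m..(m + 4/p), f x * Wf x)
      = ∫ x in m..(m + 4/p), f x * (Wf x - W₀) := by
    have hiW : IntervalIntegrable (fun x => f x * (Wf x - W₀)) volume m (m + 4/p) :=
      hii m (m + 4/p) le_rfl (by linarith)
    have hiC : IntervalIntegrable (fun x => f x * W₀) volume m (m + 4/p) :=
      ((hfc.mul continuous_const)).intervalIntegrable _ _
    rw [intervalIntegral.integral_congr (g := fun x => f x * (Wf x - W₀) + f x * W₀)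
        (fun x _ => by ring)]
    rw [intervalIntegral.integral_add hiW hiC, intervalIntegral.integral_mul_const, hmass]
    ring
  rw [hstep]
  -- Step C : split into four pieces
  have hsplit12 := intervalIntegral.integral_add_adjacent_intervals
    (hii m b1 le_rfl (by linarith)) (hii b1 b2 (by linarith) (by linarith))
  have hsplit123 := intervalIntegral.integral_add_adjacent_intervals
    (hii m b2 le_rfl (by linarith)) (hii b2 b3 (by linarith) (by linarith))
  have hsplit1234 := intervalIntegral.integral_add_adjacent_intervals
    (hii m b3 le_rfl (by linarith)) (hii b3 (m + 4/p) (by linarith) (by linarith))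
  -- pointwise bounds on pieces
  have P1 : 0 ≤ ∫ x in m..b1, f x * (Wf x - W₀) := by
    apply intervalIntegral.integral_nonneg (by linarith)
    intro x hx
    have hx1 : m ≤ x := hx.1
    have hx2 : x ≤ b1 := hx.2
    apply mul_nonneg
    · show 0 ≤ Phi p (x - ξ - 1) - Phi p (x - ξ)
      simp only [sub_nonneg]
      unfold Phi
      exact SL1 hp4 hp6 (by linarith [hmdef.le, hmdef.ge, hqdef.le, hqdef.ge])
        (by linarith [hb1.le, hb1.ge])
    · rw [sub_nonneg, hW0def]
      have hxb3 : x ≤ b3 := le_trans hx2 (by rw [hb1, hb3]; linarith)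
      exact Wf_anti (by linarith) hxb3
  have P2 : 0 < ∫ x in b1..b2, f x * (Wf x - W₀) := by
    apply intervalIntegral.intervalIntegral_pos_of_pos_on
      (hii b1 b2 (by linarith) (by linarith)) _ (by linarith)
    intro x hx
    have hx1 : b1 < x := hx.1
    have hx2 : x < b2 := hx.2
    apply mul_pos
    · show 0 < Phi p (x - ξ - 1) - Phi p (x - ξ)
      have hz : Phi p (x - ξ) = 0 := by
        unfold Phi
        rw [SL2 hp4 hp6 (le_of_lt (by linarith [hb1.le, hb1.ge]))
          (by linarith [hb2.le, hb2.ge, e2p, e4p, hr2])]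
        norm_num
      rw [hz, sub_zero]
      unfold Phi
      exact SL3 hp4 hp6 (by linarith [hb1.le, hb1.ge]) (by linarith [hb2.le, hb2.ge])
    · rw [sub_pos, hW0def]
      exact Wf_anti_strict (by linarith [o1]) (lt_of_lt_of_le hx2 o3)
  have P3 : 0 ≤ ∫ x in b2..b3, f x * (Wf x - W₀) := by
    apply intervalIntegral.integral_nonneg (by linarith)
    intro x hx
    have hx1 : b2 ≤ x := hx.1
    have hx2 : x ≤ b3 := hx.2
    apply mul_nonneg
    · show 0 ≤ Phi p (x - ξ - 1) - Phi p (x - ξ)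
      have hz : Phi p (x - ξ) = 0 := by
        unfold Phi
        rw [SL2 hp4 hp6 (by linarith [hb2.le, hb2.ge, e2p, e4p, hr2])
          (by linarith [hb3.le, hb3.ge])]
        norm_num
      rw [hz, sub_zero]
      unfold Phi
      positivity
    · rw [sub_nonneg, hW0def]
      exact Wf_anti (by linarith [o1, o2]) hx2
  have P4 : 0 ≤ ∫ x in b3..(m + 4/p), f x * (Wf x - W₀) := by
    apply intervalIntegral.integral_nonneg (by linarith)
    intro x hx
    have hx1 : b3 ≤ x := hx.1
    have hx2 : x ≤ m + 4/p := hx.2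
    have h1 : Phi p (x - ξ - 1) - Phi p (x - ξ) ≤ 0 := by
      simp only [sub_nonpos]
      rcases le_total x (ξ + 1) with hc | hc
      · have hz : Phi p (x - ξ - 1) = 0 := by
          unfold Phi
          rw [SL4 hp4 hp6 (by linarith [hb3.le, hb3.ge]) (by linarith)]
          norm_num
        rw [hz]
        unfold Phi
        positivity
      · unfold Phi
        exact SL5 hp4 hp6 (by linarith)
          (by linarith [hmdef.le, hmdef.ge, hqdef.le, hqdef.ge])
    have h2 : Wf x - W₀ ≤ 0 := by
      rw [sub_nonpos, hW0def]
      have hb30 : 0 < b3 := by rw [hb3]; linarith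
      exact Wf_anti hb30 hx1
    show 0 ≤ (Phi p (x - ξ - 1) - Phi p (x - ξ)) * (Wf x - W₀)
    nlinarith [mul_nonneg (neg_nonneg.2 h1) (neg_nonneg.2 h2)]
  -- combine
  rw [← hsplit1234, ← hsplit123, ← hsplit12] at *
  linarith [P1, P2, P3, P4]


lemma level_interval_sin {p : ℝ} {n : ℕ} {ξ : ℝ} (hp : 0 < p)
    (hI : IntervalAtLevel p n ξ) :
    ∀ y : ℝ, Real.sin (p/2*π*(y - n)) = Real.sin (p/2*π*(y - ξ)) := by
  obtain ⟨x₀, hx₀, hcomp⟩ := hI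
  have hsub : Set.Ioo ξ (ξ + 2/p) ⊆ {y : ℝ | 0 < Real.sin (p/2*π*(y - n))} := by
    rw [← hcomp]; exact connectedComponentIn_subset _ _
  have hπ := Real.pi_pos
  have h2p : 0 < 2/p := by positivity
  have hFc : Continuous (fun y : ℝ => Real.sin (p/2*π*(y - (n:ℝ)))) := by fun_prop
  have hb1 : 0 ≤ Real.sin (p/2*π*(ξ - n)) := by
    have ht : Filter.Tendsto (fun y : ℝ => Real.sin (p/2*π*(y - (n:ℝ))))
        (nhdsWithin ξ (Set.Ioi ξ)) (nhds (Real.sin (p/2*π*(ξ - n)))) :=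
      (hFc.tendsto ξ).mono_left nhdsWithin_le_nhds
    refine ge_of_tendsto ht ?_
    filter_upwards [Ioo_mem_nhdsGT_of_mem (⟨le_refl ξ, by linarith⟩ : ξ ∈ Set.Ico ξ (ξ + 2/p))]
      with y hy
    exact le_of_lt (hsub hy)
  have hb2 : 0 ≤ Real.sin (p/2*π*(ξ + 2/p - n)) := by
    have ht : Filter.Tendsto (fun y : ℝ => Real.sin (p/2*π*(y - (n:ℝ))))
        (nhdsWithin (ξ + 2/p) (Set.Iio (ξ + 2/p))) (nhds (Real.sin (p/2*π*(ξ + 2/p - n)))) :=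
      (hFc.tendsto _).mono_left nhdsWithin_le_nhds
    refine ge_of_tendsto ht ?_
    filter_upwards [Ioo_mem_nhdsLT_of_mem (⟨by linarith, le_refl _⟩ : ξ + 2/p ∈ Set.Ioc ξ (ξ + 2/p))]
      with y hy
    exact le_of_lt (hsub hy)
  have harg : p/2*π*(ξ + 2/p - n) = p/2*π*(ξ - n) + π := by field_simp; ring
  have hzero : Real.sin (p/2*π*(ξ - n)) = 0 := by
    rw [harg, Real.sin_add_pi] at hb2
    linarith
  obtain ⟨j, hj⟩ := Real.sin_eq_zero_iff.1 hzero
  have hmid : 0 < Real.sin (p/2*π*(ξ + 1/p - n)) := by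
    apply hsub
    constructor
    · have : 0 < 1/p := by positivity
      linarith
    · have : 1/p < 2/p := (div_lt_div_iff_of_pos_right hp).2 one_lt_two
      linarith
  have hmidarg : p/2*π*(ξ + 1/p - n) = ↑j * π + π/2 := by
    have e : p/2*π*(ξ + 1/p - n) = p/2*π*(ξ - n) + π/2 := by field_simp; ring
    rw [e, ← hj]
  rcases Int.even_or_odd j with ⟨k, hk⟩ | ⟨k, hk⟩
  · intro y
    have hj' : ((k:ℝ) + (k:ℝ)) * π = p/2*π*(ξ - n) := by
      rw [← hj, hk]; push_cast; ring
    have e : p/2*π*(y - n) = p/2*π*(y - ξ) + ↑k * (2*π) := by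
      linear_combination -hj'
    rw [e, Real.sin_add_int_mul_two_pi]
  · exfalso
    rw [hmidarg, Real.sin_add_pi_div_two] at hmid
    have hcos : Real.cos (↑j * π) = -1 := by
      rw [hk]
      push_cast
      have e : ((2*(k:ℝ)+1)) * π = π + ↑k * (2*π) := by ring
      rw [e, Real.cos_add_int_mul_two_pi, Real.cos_pi]
    rw [hcos] at hmid
    linarith

lemma maxsq (s t : ℝ) (ht : 0 < t) : (max 0 (s / t))^2 = (max 0 s)^2 * (1/t^2) := by
  rcases le_or_gt s 0 with h | h
  · rw [max_eq_left (div_nonpos_of_nonpos_of_nonneg h ht.le), max_eq_left h]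
    simp
  · rw [max_eq_right (le_of_lt (div_pos h ht)), max_eq_right h.le]
    field_simp

lemma Kp_agree {p : ℝ} {τ γ : ℕ → ℝ} {n : ℕ} {m T : ℝ}
    (hτmono : Monotone τ) (hγmono : Monotone γ)
    (hγn1 : γ (n+1) = m) (hγk : ∀ k, k ≠ n+1 → γ k = τ k)
    (hτn1 : τ (n+1) = m + T) (hT : 0 < T)
    {x : ℝ} (hx : x ∉ Set.Icc m (m + T)) : Kp p γ x = Kp p τ x := by
  classical
  have hsum_τ := Kp_summand_summable (p := p) hτmono x
  have hsum_γ := Kp_summand_summable (p := p) hγmono x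
  have h1 := Summable.sum_add_tsum_compl (s := ({n, n+1} : Finset ℕ)) hsum_τ
  have h2 := Summable.sum_add_tsum_compl (s := ({n, n+1} : Finset ℕ)) hsum_γ
  have hcompl : (∑' (k : ↑((↑({n, n+1} : Finset ℕ) : Set ℕ))ᶜ),
        (Set.Ioo (γ (k:ℕ)) (γ ((k:ℕ) + 1))).indicator
          (fun y => Real.sin (p / 2 * π * (y - (k:ℕ))) / (π * y)) x)
      = ∑' (k : ↑((↑({n, n+1} : Finset ℕ) : Set ℕ))ᶜ),
        (Set.Ioo (τ (k:ℕ)) (τ ((k:ℕ) + 1))).indicator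
          (fun y => Real.sin (p / 2 * π * (y - (k:ℕ))) / (π * y)) x := by
    apply tsum_congr
    rintro ⟨k, hk⟩
    simp only [Set.mem_compl_iff, Finset.coe_insert, Set.mem_insert_iff, Finset.coe_singleton,
      Set.mem_singleton_iff, not_or] at hk
    rw [hγk k (by omega), hγk (k+1) (by omega)]
  have hfin : (∑ k ∈ ({n, n+1} : Finset ℕ),
        (Set.Ioo (γ k) (γ (k + 1))).indicator
          (fun y => Real.sin (p / 2 * π * (y - k)) / (π * y)) x)
      = ∑ k ∈ ({n, n+1} : Finset ℕ),
        (Set.Ioo (τ k) (τ (k + 1))).indicator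
          (fun y => Real.sin (p / 2 * π * (y - k)) / (π * y)) x := by
    rw [Finset.sum_pair (by omega : n ≠ n+1), Finset.sum_pair (by omega : n ≠ n+1)]
    rw [hγk n (by omega), hγn1, hγk (n+1+1) (by omega)]
    rw [Set.mem_Icc, not_and_or] at hx
    push_neg at hx
    rcases hx with hxm | hxm
    · -- x < m
      have e1 : (Set.Ioo m (τ (n+1+1))).indicator
          (fun y => Real.sin (p / 2 * π * (y - (n+1:ℕ))) / (π * y)) x = 0 :=
        Set.indicator_of_notMem (fun hmem => absurd hmem.1 (by linarith)) _
      have e2 : (Set.Ioo (τ (n+1)) (τ (n+1+1))).indicator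
          (fun y => Real.sin (p / 2 * π * (y - (n+1:ℕ))) / (π * y)) x = 0 :=
        Set.indicator_of_notMem (fun hmem => absurd hmem.1 (by rw [hτn1] at *; linarith)) _
      rw [e1, e2]
      by_cases hτnx : τ n < x
      · rw [Set.indicator_of_mem (Set.mem_Ioo.2 ⟨hτnx, hxm⟩), Set.indicator_of_mem (Set.mem_Ioo.2 ⟨hτnx, by rw [hτn1]; linarith⟩)]
      · rw [Set.indicator_of_notMem (fun hmem => hτnx hmem.1),
          Set.indicator_of_notMem (fun hmem => hτnx hmem.1)]
    · -- m + T < x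
      have e1 : (Set.Ioo (τ n) m).indicator
          (fun y => Real.sin (p / 2 * π * (y - (n:ℕ))) / (π * y)) x = 0 :=
        Set.indicator_of_notMem (fun hmem => absurd hmem.2 (by linarith)) _
      have e2 : (Set.Ioo (τ n) (τ (n+1))).indicator
          (fun y => Real.sin (p / 2 * π * (y - (n:ℕ))) / (π * y)) x = 0 :=
        Set.indicator_of_notMem (fun hmem => absurd hmem.2 (by rw [hτn1] at *; linarith)) _
      rw [e1, e2]
      by_cases hτx : x < τ (n+1+1)
      · rw [Set.indicator_of_mem (Set.mem_Ioo.2 ⟨by linarith, hτx⟩),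
          Set.indicator_of_mem (Set.mem_Ioo.2 ⟨by rw [hτn1]; linarith, hτx⟩)]
      · rw [Set.indicator_of_notMem (fun hmem => hτx hmem.2),
          Set.indicator_of_notMem (fun hmem => hτx hmem.2)]
  unfold Kp
  rw [← h1, ← h2, hfin, hcompl]

set_option maxHeartbeats 1000000 in
theorem stmt15 (p δ₁ δ₂ : ℝ) (n : ℕ) (ξ : ℝ) (τ γ : ℕ → ℝ)
    (hp4 : 4 < p) (hp6 : p ≤ 6)
    (hδ1 : 0 < δ₁) (hδ1' : δ₁ ≤ 1 / 2 + 3 / p) (hδ2 : 0 < δ₂) (hδ2' : δ₂ ≤ 1)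
    (hI : IntervalAtLevel p n ξ) (hξ : 0 < ξ)
    (hτ : τ ∈ Tset δ₁ δ₂)
    (hτn : τ n ≤ ξ)
    (hτn1 : τ (n + 1) = (ξ + 1 / 2 - 1 / p) + 4 / p)
    (hτn2 : ξ + 1 + 2 / p ≤ τ (n + 2))
    (hγ : γ (n + 1) = ξ + 1 / 2 - 1 / p)
    (hγk : ∀ k : ℕ, k ≠ n + 1 → γ k = τ k) :
    Ep p τ < Ep p γ := by
  obtain ⟨hτ0, hτmono, hτ1, _hτgap⟩ := hτ
  have hp0 : (0:ℝ) < p := by linarith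
  have hπ := Real.pi_pos
  have hr1 : 1/p < 1/4 := one_div_lt_one_div_of_lt (by norm_num) hp4
  have hr2 : 1/6 ≤ 1/p := one_div_le_one_div_of_le hp0 hp6
  have hsin := level_interval_sin hp0 hI
  -- the key point m and width
  have hm0 : 0 < ξ + (1/2 - 1/p) := by linarith
  have hmT : τ (n+1) = (ξ + (1/2 - 1/p)) + 4/p := by rw [hτn1]; ring
  have hγn1 : γ (n+1) = ξ + (1/2 - 1/p) := by rw [hγ]; ring
  have hn2e : n + 1 + 1 = n + 2 := by omega
  have hτn2' : (ξ + (1/2 - 1/p)) + 4/p ≤ τ (n+1+1) := by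
    rw [hn2e]
    have e2p : (2:ℝ)/p = 2*(1/p) := by ring
    have e3p : (3:ℝ)/p = 3*(1/p) := by ring
    have e4p : (4:ℝ)/p = 4*(1/p) := by ring
    linarith
  -- γ basic facts
  have hγ0 : γ 0 = 0 := by rw [hγk 0 (by omega), hτ0]
  have hγmono : StrictMono γ := by
    apply strictMono_nat_of_lt_succ
    intro k
    rcases eq_or_ne k n with rfl | hk1
    · rw [hγk k (by omega), hγn1]
      linarith
    · rcases eq_or_ne k (n+1) with rfl | hk2
      · rw [hγn1, hγk (n+1+1) (by omega)]
        linarith [hτn2', show (0:ℝ) < 4/p by positivity]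
      · rw [hγk k hk2, hγk (k+1) (by omega)]
        exact hτmono (lt_add_one k)
  have hτ1pos : 0 < τ 1 := lt_of_lt_of_le hδ1 hτ1
  have hγ1 : 0 < γ 1 := by
    rcases Nat.eq_zero_or_pos n with rfl | hn
    · rw [show (1:ℕ) = 0 + 1 from rfl, hγn1]
      linarith
    · rw [hγk 1 (by omega)]
      exact hτ1pos
  -- integrability
  have hτint := integrable_F hτ0 hτmono.monotone hp0 hτ1pos
  have hγint := integrable_F hγ0 hγmono.monotone hp0 hγ1
  -- agreement away from the moved interval
  have hagree : ∀ x : ℝ, x ∉ Set.Icc (ξ + (1/2 - 1/p)) ((ξ + (1/2 - 1/p)) + 4/p) →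
      Kp p γ x = Kp p τ x := by
    intro x hx
    exact Kp_agree hτmono.monotone hγmono.monotone hγn1 hγk hmT (by positivity) hx
  -- main chain
  rw [← sub_pos]
  have hEq1 : Ep p γ - Ep p τ = ∫ x in Set.Ioi (0:ℝ),
      ((max 0 (Kp p γ x))^2 - (max 0 (Kp p τ x))^2) := by
    unfold Ep
    rw [MeasureTheory.integral_sub hγint hτint]
  have hsubset : Set.Icc (ξ + (1/2 - 1/p)) ((ξ + (1/2 - 1/p)) + 4/p) ⊆ Set.Ioi (0:ℝ) := by
    intro x hx
    have := hx.1
    simp only [Set.mem_Ioi]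
    linarith
  have hEq2 : (∫ x in Set.Ioi (0:ℝ), ((max 0 (Kp p γ x))^2 - (max 0 (Kp p τ x))^2))
      = ∫ x in Set.Icc (ξ + (1/2 - 1/p)) ((ξ + (1/2 - 1/p)) + 4/p),
        ((max 0 (Kp p γ x))^2 - (max 0 (Kp p τ x))^2) := by
    apply MeasureTheory.setIntegral_eq_of_subset_of_forall_diff_eq_zero
      measurableSet_Ioi hsubset
    intro x hx
    rw [hagree x hx.2]
    ring
  have hEq3 : (∫ x in Set.Icc (ξ + (1/2 - 1/p)) ((ξ + (1/2 - 1/p)) + 4/p),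
        ((max 0 (Kp p γ x))^2 - (max 0 (Kp p τ x))^2))
      = ∫ x in Set.Ioo (ξ + (1/2 - 1/p)) ((ξ + (1/2 - 1/p)) + 4/p),
        ((max 0 (Kp p γ x))^2 - (max 0 (Kp p τ x))^2) :=
    MeasureTheory.integral_Icc_eq_integral_Ioo
  have hEqOn : ∀ x ∈ Set.Ioo (ξ + (1/2 - 1/p)) ((ξ + (1/2 - 1/p)) + 4/p),
      ((max 0 (Kp p γ x))^2 - (max 0 (Kp p τ x))^2)
        = (Phi p (x - ξ - 1) - Phi p (x - ξ)) * Wf x := by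
    intro x hx
    have hx1 : ξ + (1/2 - 1/p) < x := hx.1
    have hx2 : x < (ξ + (1/2 - 1/p)) + 4/p := hx.2
    have hx0 : 0 < x := by linarith
    have hπx : 0 < π * x := by positivity
    have hxmemτ : x ∈ Set.Ioo (τ n) (τ (n+1)) := by
      constructor
      · linarith
      · rw [hmT]; exact hx2
    have hxmemγ : x ∈ Set.Ioo (γ (n+1)) (γ (n+1+1)) := by
      constructor
      · rw [hγn1]; exact hx1
      · rw [hγk (n+1+1) (by omega)]
        linarith [hτn2']
    rw [Kp_eval hτmono.monotone hxmemτ, Kp_eval hγmono.monotone hxmemγ]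
    have s1 : Real.sin (p/2*π*(x - (n:ℝ))) = Real.sin (p/2*π*(x - ξ)) := hsin x
    have s2 : Real.sin (p/2*π*(x - ((n+1:ℕ):ℝ))) = Real.sin (p/2*π*(x - ξ - 1)) := by
      have e : p/2*π*(x - ((n+1:ℕ):ℝ)) = p/2*π*((x-1) - (n:ℝ)) := by push_cast; ring
      rw [e, hsin (x-1)]
      congr 1
      ring
    rw [s1, s2, maxsq _ _ hπx, maxsq _ _ hπx]
    unfold Phi Wf
    ring
  have hEq4 : (∫ x in Set.Ioo (ξ + (1/2 - 1/p)) ((ξ + (1/2 - 1/p)) + 4/p),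
        ((max 0 (Kp p γ x))^2 - (max 0 (Kp p τ x))^2))
      = ∫ x in Set.Ioo (ξ + (1/2 - 1/p)) ((ξ + (1/2 - 1/p)) + 4/p),
        ((Phi p (x - ξ - 1) - Phi p (x - ξ)) * Wf x) := by
    apply MeasureTheory.setIntegral_congr_fun measurableSet_Ioo
    intro x hx
    exact hEqOn x hx
  have hEq5 : (∫ x in Set.Ioo (ξ + (1/2 - 1/p)) ((ξ + (1/2 - 1/p)) + 4/p),
        ((Phi p (x - ξ - 1) - Phi p (x - ξ)) * Wf x))
      = ∫ x in (ξ + (1/2 - 1/p))..((ξ + (1/2 - 1/p)) + 4/p),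
        ((Phi p (x - ξ - 1) - Phi p (x - ξ)) * Wf x) := by
    rw [intervalIntegral.integral_of_le (by linarith [show (0:ℝ) < 4/p by positivity]), MeasureTheory.integral_Ioc_eq_integral_Ioo]
  rw [hEq1, hEq2, hEq3, hEq4, hEq5]
  exact core p ξ hp4 hp6 hξ
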